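/- Let $L$ be a partially ordered vector space whose positive cone has interior point $x_0$, equipped with the topology generated by the neighbourhoods $\langle z;\delta\rangle$. If a weakly additive, order-preserving functional $f\colon L \to \mathbb{R}$ is continuous at $0$, then $f$ is continuous on all of $L$. -/

import Mathlib

def InnerSeg {L : Type*} [AddCommGroup L] [Module ℝ L] (a b x : L) : Prop :=
  x ∈ segment ℝ a b ∧ x ≠ a ∧ x ≠ b

def InnerPoint {L : Type*} [AddCommGroup L] [Module ℝ L] (S : Set L) (x : L) : Prop :=
  x ∈ S ∧ ∀ a b : L, InnerSeg a b x →
    ∃ c d : L, c ∈ segment ℝ a b ∩ S ∧ d ∈ segment ℝ a b ∩ S ∧ InnerSeg c d x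

def coneNbhd {L : Type*} [AddCommGroup L] [PartialOrder L] [Module ℝ L]
    (x₀ z : L) (δ : ℝ) : Set L :=
  {y : L | InnerPoint {v : L | 0 ≤ v} (δ • x₀ + (y - z)) ∧
           InnerPoint {v : L | 0 ≤ v} (δ • x₀ - (y - z))}

def coneTop {L : Type*} [AddCommGroup L] [PartialOrder L] [Module ℝ L]
    (x₀ : L) : TopologicalSpace L :=
  TopologicalSpace.generateFrom {s : Set L | ∃ z : L, ∃ δ : ℝ, 0 < δ ∧ s = coneNbhd x₀ z δ}

def WeaklyAdditive {L : Type*} [AddCommGroup L] [Module ℝ L] (x₀ : L) (f : L → ℝ) : Prop :=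
  ∀ x : L, ∀ l : ℝ, f (x + l • x₀) = f x + l * f x₀

private lemma seg_smul {L : Type*} [AddCommGroup L] [Module ℝ L] {a b x : L} (δ : ℝ)
    (h : x ∈ segment ℝ a b) : δ • x ∈ segment ℝ (δ • a) (δ • b) := by
  obtain ⟨u, v, hu, hv, huv, hx⟩ := h
  exact ⟨u, v, hu, hv, huv, by rw [← hx]; module⟩

private lemma innerSeg_smul {L : Type*} [AddCommGroup L] [Module ℝ L] {a b x : L} {δ : ℝ}
    (hδ : δ ≠ 0) (h : InnerSeg a b x) : InnerSeg (δ • a) (δ • b) (δ • x) := by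
  have hinj : Function.Injective (fun y : L => δ • y) := smul_right_injective L hδ
  exact ⟨seg_smul δ h.1, fun he => h.2.1 (hinj he), fun he => h.2.2 (hinj he)⟩

private lemma innerPoint_smul {L : Type*} [AddCommGroup L] [PartialOrder L] [IsOrderedAddMonoid L] [Module ℝ L]
    [PosSMulStrictMono ℝ L] {x : L} {δ : ℝ} (hδ : 0 < δ)
    (h : InnerPoint {v : L | 0 ≤ v} x) : InnerPoint {v : L | 0 ≤ v} (δ • x) := by
  refine ⟨smul_nonneg hδ.le h.1, fun a b hab => ?_⟩
  have hδ' : δ⁻¹ ≠ 0 := inv_ne_zero hδ.ne'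
  have hx : InnerSeg (δ⁻¹ • a) (δ⁻¹ • b) x := by
    have := innerSeg_smul (a := a) (b := b) (x := δ • x) hδ' hab
    rwa [inv_smul_smul₀ hδ.ne'] at this
  obtain ⟨c, d, ⟨hcseg, hc⟩, ⟨hdseg, hd⟩, hcd⟩ := h.2 _ _ hx
  refine ⟨δ • c, δ • d, ⟨?_, smul_nonneg hδ.le hc⟩, ⟨?_, smul_nonneg hδ.le hd⟩,
    innerSeg_smul hδ.ne' hcd⟩
  · have := seg_smul δ hcseg
    rwa [smul_inv_smul₀ hδ.ne', smul_inv_smul₀ hδ.ne'] at this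
  · have := seg_smul δ hdseg
    rwa [smul_inv_smul₀ hδ.ne', smul_inv_smul₀ hδ.ne'] at this

theorem stmt6 {L : Type*} [AddCommGroup L] [PartialOrder L] [IsOrderedAddMonoid L] [Module ℝ L] [PosSMulStrictMono ℝ L]
    (x₀ : L) (hx₀ : InnerPoint {v : L | 0 ≤ v} x₀)
    (f : L → ℝ) (hwa : WeaklyAdditive x₀ f) (hmono : Monotone f)
    (hcont0 : @ContinuousAt L ℝ (coneTop x₀) _ f 0) :
    @Continuous L ℝ (coneTop x₀) _ f := by
  letI := coneTop x₀
  rw [continuous_iff_continuousAt]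
  intro z
  rw [ContinuousAt, Metric.tendsto_nhds]
  intro ε hε
  set δ := ε / (2 * (|f x₀| + 1)) with hδdef
  have habs : (0:ℝ) < |f x₀| + 1 := by positivity
  have hδ : 0 < δ := by positivity
  have hopen : IsOpen (coneNbhd x₀ z δ) :=
    TopologicalSpace.GenerateOpen.basic _ ⟨z, δ, hδ, rfl⟩
  have hz : z ∈ coneNbhd x₀ z δ := by
    constructor <;> simp only [sub_self, add_zero, sub_zero] <;>
      exact innerPoint_smul hδ hx₀
  filter_upwards [hopen.mem_nhds hz] with y hy
  have h1 : z + (-δ) • x₀ ≤ y := by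
    have h := hy.1.1
    simp only [Set.mem_setOf_eq] at h
    have he : y - (z - δ • x₀) = δ • x₀ + (y - z) := by abel
    rw [neg_smul, ← sub_eq_add_neg, ← sub_nonneg, he]
    exact h
  have h2 : y ≤ z + δ • x₀ := by
    have := hy.2.1
    simp only [Set.mem_setOf_eq] at this
    have := add_le_add_left this y
    calc y = y + 0 := by rw [add_zero]
    _ ≤ y + (δ • x₀ - (y - z)) := by rw [add_comm y 0, add_comm y]; exact this
    _ = z + δ • x₀ := by abel
  have hf1 : f z + (-δ) * f x₀ ≤ f y := by rw [← hwa z (-δ)]; exact hmono h1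
  have hf2 : f y ≤ f z + δ * f x₀ := by rw [← hwa z δ]; exact hmono h2
  have hb : δ * f x₀ ≤ δ * |f x₀| :=
    mul_le_mul_of_nonneg_left (le_abs_self _) hδ.le
  have hb2 : δ * (|f x₀| + 1) = ε / 2 := by
    rw [hδdef]; field_simp
  rw [Real.dist_eq, abs_sub_lt_iff]
  constructor <;> nlinarith [hδ, hε, hb, hb2, hf1, hf2]
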